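/- Suppose that for every arm a ≠ a*, the only vector x ∈ ℝ^d with X_{a*}x = 0 and X_a x = 0 is x = 0 (i.e., Null(X_{a*}) ∩ Null(X_a) = {0}). Then every nonzero context x ∈ ℝ^d can be ε-strongly attacked into pulling a*. -/

import Mathlib

open Matrix

/-- The regularized Gram matrix `V = XᵀX + λI`. -/
noncomputable def Vmat {m d : ℕ} (lam : ℝ) (X : Matrix (Fin m) (Fin d) ℝ) :
    Matrix (Fin d) (Fin d) ℝ :=
  Xᵀ * X + lam • (1 : Matrix (Fin d) (Fin d) ℝ)

/-- The Mahalanobis norm `‖x‖_{V⁻¹} = √(xᵀ V⁻¹ x)`. -/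
noncomputable def mahNorm {d : ℕ} (V : Matrix (Fin d) (Fin d) ℝ) (x : Fin d → ℝ) : ℝ :=
  Real.sqrt (x ⬝ᵥ (V⁻¹ *ᵥ x))

/-- The post-attack ridge regression estimate `θ̂ = V⁻¹ Xᵀ (y + Δ)`. -/
noncomputable def thetaHat {m d : ℕ} (lam : ℝ) (X : Matrix (Fin m) (Fin d) ℝ)
    (y Δ : Fin m → ℝ) : Fin d → ℝ :=
  (Vmat lam X)⁻¹ *ᵥ (Xᵀ *ᵥ (y + Δ))

/-- The post-attack UCB index of arm `a` at context `x`: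
`xᵀ θ̂_a(Δ_a) + α_a ‖x‖_{V_a⁻¹}`. -/
noncomputable def ucbIndex {K d : ℕ} (lam : ℝ) (m : Fin K → ℕ)
    (X : ∀ a, Matrix (Fin (m a)) (Fin d) ℝ) (y : ∀ a, Fin (m a) → ℝ)
    (α : Fin K → ℝ) (Δ : ∀ a, Fin (m a) → ℝ) (x : Fin d → ℝ) (a : Fin K) : ℝ :=
  x ⬝ᵥ thetaHat lam (X a) (y a) (Δ a) + α a * mahNorm (Vmat lam (X a)) x

/-- The perturbation family `Δ` ε-strongly attacks context `x` into pulling arm `astar`. -/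
def StronglyAttacks {K d : ℕ} (lam : ℝ) (m : Fin K → ℕ)
    (X : ∀ a, Matrix (Fin (m a)) (Fin d) ℝ) (y : ∀ a, Fin (m a) → ℝ)
    (α : Fin K → ℝ) (astar : Fin K) (ε : ℝ)
    (Δ : ∀ a, Fin (m a) → ℝ) (x : Fin d → ℝ) : Prop :=
  ∀ a : Fin K, a ≠ astar →
    ucbIndex lam m X y α Δ x astar ≥ ε + ucbIndex lam m X y α Δ x a

/-- The perturbation family `Δ` weakly attacks context `x` into pulling arm `astar`. -/
def WeaklyAttacks {K d : ℕ} (lam : ℝ) (m : Fin K → ℕ)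
    (X : ∀ a, Matrix (Fin (m a)) (Fin d) ℝ) (y : ∀ a, Fin (m a) → ℝ)
    (α : Fin K → ℝ) (astar : Fin K)
    (Δ : ∀ a, Fin (m a) → ℝ) (x : Fin d → ℝ) : Prop :=
  ∀ a : Fin K, a ≠ astar →
    ucbIndex lam m X y α Δ x astar > ucbIndex lam m X y α Δ x a

lemma Vmat_posDef {mm d : ℕ} {lam : ℝ} (hlam : 0 < lam) (X : Matrix (Fin mm) (Fin d) ℝ) :
    (Vmat lam X).PosDef := by
  have h1 : (Xᵀ * X).PosSemidef := by
    simpa using Matrix.posSemidef_conjTranspose_mul_self X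
  have h2 : (lam • (1 : Matrix (Fin d) (Fin d) ℝ)).PosDef := by
    rw [Matrix.smul_one_eq_diagonal]
    exact Matrix.posDef_diagonal_iff.mpr (fun _ => hlam)
  rw [Vmat, add_comm]
  exact h2.add_posSemidef h1

lemma Vmat_symm {mm d : ℕ} (lam : ℝ) (X : Matrix (Fin mm) (Fin d) ℝ) :
    (Vmat lam X)ᵀ = Vmat lam X := by
  simp [Vmat, Matrix.transpose_add, Matrix.transpose_mul, Matrix.transpose_smul]

lemma Vmat_mulVec {mm d : ℕ} (lam : ℝ) (X : Matrix (Fin mm) (Fin d) ℝ) (v : Fin d → ℝ) :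
    Vmat lam X *ᵥ v = Xᵀ *ᵥ (X *ᵥ v) + lam • v := by
  simp [Vmat, Matrix.add_mulVec, Matrix.smul_mulVec, mulVec_mulVec]

lemma dot_theta {mm d : ℕ} (lam : ℝ) (X : Matrix (Fin mm) (Fin d) ℝ)
    (x : Fin d → ℝ) (v : Fin mm → ℝ) :
    x ⬝ᵥ ((Vmat lam X)⁻¹ *ᵥ (Xᵀ *ᵥ v)) = (X *ᵥ ((Vmat lam X)⁻¹ *ᵥ x)) ⬝ᵥ v := by
  have hsym : ((Vmat lam X)⁻¹)ᵀ = (Vmat lam X)⁻¹ := by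
    rw [Matrix.transpose_nonsing_inv, Vmat_symm]
  rw [Matrix.dotProduct_mulVec x, ← Matrix.mulVec_transpose, hsym,
    Matrix.dotProduct_mulVec, Matrix.vecMul_transpose]

lemma nullC {mm d : ℕ} {lam : ℝ} (hlam : 0 < lam) (X : Matrix (Fin mm) (Fin d) ℝ)
    (x : Fin d → ℝ) :
    X *ᵥ ((Vmat lam X)⁻¹ *ᵥ x) = 0 ↔ X *ᵥ x = 0 := by
  have hV := Vmat_posDef hlam X
  have hdet : IsUnit (Vmat lam X).det := hV.det_pos.ne'.isUnit
  constructor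
  · intro hv
    have hx : Vmat lam X *ᵥ ((Vmat lam X)⁻¹ *ᵥ x) = x := by
      rw [mulVec_mulVec, Matrix.mul_nonsing_inv _ hdet, Matrix.one_mulVec]
    rw [Vmat_mulVec, hv] at hx
    simp only [Matrix.mulVec_zero, zero_add] at hx
    have h2 : X *ᵥ x = lam • (X *ᵥ ((Vmat lam X)⁻¹ *ᵥ x)) := by
      rw [← Matrix.mulVec_smul, hx]
    rw [hv, smul_zero] at h2
    exact h2
  · intro hx
    have h1 : Vmat lam X *ᵥ (lam⁻¹ • x) = x := by
      rw [Vmat_mulVec, Matrix.mulVec_smul, hx, smul_zero, Matrix.mulVec_zero, zero_add,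
        smul_smul, mul_inv_cancel₀ hlam.ne', one_smul]
    have h2 : (Vmat lam X)⁻¹ *ᵥ x = lam⁻¹ • x := by
      conv_lhs => rw [← h1]
      rw [mulVec_mulVec, Matrix.nonsing_inv_mul _ hdet, Matrix.one_mulVec]
    rw [h2, Matrix.mulVec_smul, hx, smul_zero]

lemma exists_dot {n : ℕ} {w : Fin n → ℝ} (hw : w ≠ 0) (y : Fin n → ℝ) (T : ℝ) :
    ∃ δ : Fin n → ℝ, w ⬝ᵥ (y + δ) = T := by
  have hww : w ⬝ᵥ w ≠ 0 := fun hc => hw (dotProduct_self_eq_zero.1 hc)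
  refine ⟨((T - w ⬝ᵥ y) / (w ⬝ᵥ w)) • w, ?_⟩
  rw [dotProduct_add, dotProduct_smul, smul_eq_mul, div_mul_cancel₀ _ hww]
  ring

/-- If for every non-target arm `a` we have `Null(X_{a*}) ∩ Null(X_a) = {0}`, then
every nonzero context can be ε-strongly attacked into pulling `a*`. -/
theorem attackable_of_trivial_null_intersection {K d : ℕ} (hK : 2 ≤ K) (hd : 1 ≤ d)
    (lam : ℝ) (hlam : 0 < lam) (m : Fin K → ℕ)
    (X : ∀ a, Matrix (Fin (m a)) (Fin d) ℝ) (y : ∀ a, Fin (m a) → ℝ)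
    (α : Fin K → ℝ) (astar : Fin K) (ε : ℝ) (hε : 0 < ε)
    (h : ∀ a : Fin K, a ≠ astar →
      ∀ z : Fin d → ℝ, X astar *ᵥ z = 0 → X a *ᵥ z = 0 → z = 0) :
    ∀ x : Fin d → ℝ, x ≠ 0 →
      ∃ Δ : ∀ a, Fin (m a) → ℝ, StronglyAttacks lam m X y α astar ε Δ x := by
  intro x hx
  set w : ∀ a, Fin (m a) → ℝ := fun a => X a *ᵥ ((Vmat lam (X a))⁻¹ *ᵥ x) with hw
  have hucb : ∀ (Δ : ∀ a, Fin (m a) → ℝ) (a : Fin K),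
      ucbIndex lam m X y α Δ x a = w a ⬝ᵥ (y a + Δ a) + α a * mahNorm (Vmat lam (X a)) x := by
    intro Δ a
    rw [ucbIndex, thetaHat, dot_theta]
  by_cases hstar : w astar = 0
  · have hne : ∀ a, a ≠ astar → w a ≠ 0 := by
      intro a ha hwa
      exact hx (h a ha x ((nullC hlam _ x).1 hstar) ((nullC hlam _ x).1 hwa))
    have hch : ∀ a : Fin K, ∃ δ : Fin (m a) → ℝ, a ≠ astar →
        w a ⬝ᵥ (y a + δ) = α astar * mahNorm (Vmat lam (X astar)) x - ε
          - α a * mahNorm (Vmat lam (X a)) x := by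
      intro a
      by_cases ha : a = astar
      · exact ⟨0, fun h' => absurd ha h'⟩
      · obtain ⟨δ, hδ⟩ := exists_dot (hne a ha) (y a) _
        exact ⟨δ, fun _ => hδ⟩
    choose Δ hΔ using hch
    refine ⟨Δ, fun a ha => ?_⟩
    rw [hucb, hucb, hΔ a ha, hstar]
    simp only [zero_dotProduct]
    linarith
  · set f : Fin K → ℝ := fun a =>
      ε + w a ⬝ᵥ y a + α a * mahNorm (Vmat lam (X a)) x
        - α astar * mahNorm (Vmat lam (X astar)) x with hf
    have hnonempty : (Finset.univ : Finset (Fin K)).Nonempty := ⟨astar, Finset.mem_univ _⟩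
    obtain ⟨δs, hδs⟩ := exists_dot hstar (y astar) (Finset.univ.sup' hnonempty f)
    refine ⟨Function.update (fun a => 0) astar δs, fun a ha => ?_⟩
    rw [hucb, hucb, Function.update_self, Function.update_of_ne ha, hδs]
    have hle : f a ≤ Finset.univ.sup' hnonempty f := Finset.le_sup' f (Finset.mem_univ a)
    simp only [hf] at hle
    rw [add_zero]
    linarith
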